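/- (Kernel expression of the empirical maximum mean discrepancy.) Let H be a real inner product space, X a set, and K : X → H a map; define the kernel k(x, y) := ⟨K(x), K(y)⟩. Let x₁, …, x_m and y₁, …, y_n be points of X with m, n ≥ 1. Then the supremum over all f ∈ H with ‖f‖ ≤ 1 of (1/m) Σ_{i=1}^m ⟨f, K(x_i)⟩ − (1/n) Σ_{j=1}^n ⟨f, K(y_j)⟩ equals [ (1/m²) Σ_{i₁,i₂=1}^m k(x_{i₁}, x_{i₂}) − (2/(mn)) Σ_{i=1}^m Σ_{j=1}^n k(x_i, y_j) + (1/n²) Σ_{j₁,j₂=1}^n k(y_{j₁}, y_{j₂}) ]^{1/2}. -/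

import Mathlib

open scoped RealInnerProductSpace

/-- Kernel expression of the empirical maximum mean discrepancy: for a map
`K : X → H` into a real inner product space with kernel `k(x,y) = ⟪K x, K y⟫`, and
samples `x₁, …, x_m`, `y₁, …, y_n`, the supremum over the unit ball `‖f‖ ≤ 1` of
`(1/m) ∑ᵢ ⟪f, K xᵢ⟫ - (1/n) ∑ⱼ ⟪f, K yⱼ⟫` equals
`( (1/m²) ∑ k(xᵢ₁,xᵢ₂) - (2/(mn)) ∑ k(xᵢ,yⱼ) + (1/n²) ∑ k(yⱼ₁,yⱼ₂) )^{1/2}`. -/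
theorem stmt15 {H : Type*} [NormedAddCommGroup H] [InnerProductSpace ℝ H]
    {X : Type*} (K : X → H) (k : X → X → ℝ) (hk : ∀ p q, k p q = ⟪K p, K q⟫)
    (m n : ℕ) (hm : 1 ≤ m) (hn : 1 ≤ n) (x : Fin m → X) (y : Fin n → X) :
    sSup ((fun f : H =>
        (1 / (m : ℝ)) * ∑ i, ⟪f, K (x i)⟫ - (1 / (n : ℝ)) * ∑ j, ⟪f, K (y j)⟫) ''
        {f : H | ‖f‖ ≤ 1})
      = Real.sqrt
          ((1 / (m : ℝ) ^ 2) * ∑ i₁, ∑ i₂, k (x i₁) (x i₂)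
            - (2 / ((m : ℝ) * (n : ℝ))) * ∑ i, ∑ j, k (x i) (y j)
            + (1 / (n : ℝ) ^ 2) * ∑ j₁, ∑ j₂, k (y j₁) (y j₂)) := by
  set v : H := (1 / (m : ℝ)) • ∑ i, K (x i) - (1 / (n : ℝ)) • ∑ j, K (y j) with hv
  have hfun : ∀ f : H,
      (1 / (m : ℝ)) * ∑ i, ⟪f, K (x i)⟫ - (1 / (n : ℝ)) * ∑ j, ⟪f, K (y j)⟫ = ⟪f, v⟫ := by
    intro f
    simp [hv, inner_sub_right, inner_smul_right, inner_sum]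
  have hS : (⟪∑ i, K (x i), ∑ i, K (x i)⟫ : ℝ) = ∑ i₁, ∑ i₂, k (x i₁) (x i₂) := by
    rw [sum_inner]; simp only [inner_sum, hk]
  have hT : (⟪∑ j, K (y j), ∑ j, K (y j)⟫ : ℝ) = ∑ j₁, ∑ j₂, k (y j₁) (y j₂) := by
    rw [sum_inner]; simp only [inner_sum, hk]
  have hST : (⟪∑ i, K (x i), ∑ j, K (y j)⟫ : ℝ) = ∑ i, ∑ j, k (x i) (y j) := by
    simp [sum_inner, inner_sum, hk]; rw [Finset.sum_comm]
  have hrhs : ((1 / (m : ℝ) ^ 2) * ∑ i₁, ∑ i₂, k (x i₁) (x i₂)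
            - (2 / ((m : ℝ) * (n : ℝ))) * ∑ i, ∑ j, k (x i) (y j)
            + (1 / (n : ℝ) ^ 2) * ∑ j₁, ∑ j₂, k (y j₁) (y j₂)) = ⟪v, v⟫ := by
    rw [hv, real_inner_sub_sub_self, real_inner_smul_left, real_inner_smul_left,
      real_inner_smul_left, real_inner_smul_right, real_inner_smul_right,
      real_inner_smul_right, hS, hT, hST]
    ring
  rw [hrhs, real_inner_self_eq_norm_sq, Real.sqrt_sq (norm_nonneg v)]
  apply IsGreatest.csSup_eq
  constructor
  · by_cases hv0 : v = 0
    · exact ⟨0, by simp, by dsimp only; rw [hfun 0]; simp [hv0]⟩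
    · refine ⟨‖v‖⁻¹ • v, ?_, ?_⟩
      · simp [norm_smul, abs_of_nonneg, inv_mul_cancel₀ (norm_ne_zero_iff.mpr hv0)]
      · dsimp only; rw [hfun, real_inner_smul_left, real_inner_self_eq_norm_sq]
        rw [sq]
        field_simp
  · rintro r ⟨f, hf, rfl⟩
    dsimp only; rw [hfun]
    calc ⟪f, v⟫ ≤ ‖f‖ * ‖v‖ := real_inner_le_norm f v
      _ ≤ 1 * ‖v‖ := mul_le_mul_of_nonneg_right hf (norm_nonneg v)
      _ = ‖v‖ := one_mul _
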